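/- Define recursively the rational functions g_p of a complex variable ω by g_1(ω) = α_1/(n_1·ω + α_1) and g_p(ω) = [((n_p-2)ω + α_p)/(n_p·ω + α_p) - ((n_p-4)ω + α_p)/(n_p·ω + α_p)·e^{-2ω a_{p-1}}·g_{p-1}(ω)] / [1 - ((n_p-2)ω + α_p)/(n_p·ω + α_p)·e^{-2ω a_{p-1}}·g_{p-1}(ω)]. If all strengths α_j are positive and all lengths a_j are positive, then for every p ≥ 1 the limit of g_p(ω) as ω → 0 along the reals exists and equals 1, i.e. g_p extends continuously to ω = 0 with g_p(0) = 1. -/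

import Mathlib

/-- `gfun n α a p` is the function `g_{p+1}` of the paper (0-based indexing):
`g_1(ω) = α_1/(n_1 ω + α_1)` and
`g_p(ω) = [((n_p-2)ω+α_p)/(n_pω+α_p) - ((n_p-4)ω+α_p)/(n_pω+α_p) e^{-2ωa_{p-1}} g_{p-1}(ω)]
          / [1 - ((n_p-2)ω+α_p)/(n_pω+α_p) e^{-2ωa_{p-1}} g_{p-1}(ω)]`. -/
noncomputable def gfun (n : ℕ → ℕ) (α a : ℕ → ℝ) : ℕ → ℂ → ℂ
  | 0, ω => (α 0 : ℂ) / ((n 0 : ℂ) * ω + (α 0 : ℂ))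
  | p + 1, ω =>
      (((((n (p + 1) : ℂ) - 2) * ω + (α (p + 1) : ℂ)) / ((n (p + 1) : ℂ) * ω + (α (p + 1) : ℂ)))
        - ((((n (p + 1) : ℂ) - 4) * ω + (α (p + 1) : ℂ)) / ((n (p + 1) : ℂ) * ω + (α (p + 1) : ℂ)))
          * Complex.exp (-2 * ω * (a p : ℂ)) * gfun n α a p ω) /
      (1 - ((((n (p + 1) : ℂ) - 2) * ω + (α (p + 1) : ℂ)) / ((n (p + 1) : ℂ) * ω + (α (p + 1) : ℂ)))
          * Complex.exp (-2 * ω * (a p : ℂ)) * gfun n α a p ω)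

open Filter Topology

private lemma div_identity (Nv Dv t : ℂ) (ht : t ≠ 0) (hD : Dv ≠ 0) :
    (Dv - Nv) / t ^ 2 / (Dv / t) = (1 - Nv / Dv) / t := by
  field_simp

private lemma exp_slope (b : ℝ) :
    Tendsto (fun t : ℝ => (1 - Complex.exp (-2 * (t : ℂ) * (b : ℂ))) / (t : ℂ))
      (𝓝[≠] (0 : ℝ)) (𝓝 (2 * (b : ℂ))) := by
  have h0 : HasDerivAt (fun z : ℂ => -2 * z * (b : ℂ)) (-2 * (b : ℂ)) 0 := by
    simpa using ((hasDerivAt_id (0 : ℂ)).const_mul (-2 : ℂ)).mul_const (b : ℂ)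
  have h1 : HasDerivAt (fun z : ℂ => Complex.exp (-2 * z * (b : ℂ))) (-2 * (b : ℂ)) 0 := by
    simpa using h0.cexp
  have h2 : HasDerivAt (fun t : ℝ => Complex.exp (-2 * (t : ℂ) * (b : ℂ))) (-2 * (b : ℂ)) 0 :=
    h1.comp_ofReal
  have h3 := hasDerivAt_iff_tendsto_slope.mp h2
  have h4 := h3.neg
  rw [show -(-2 * (b : ℂ)) = 2 * (b : ℂ) from by ring] at h4
  refine h4.congr' ?_
  filter_upwards [self_mem_nhdsWithin] with t ht
  have ht' : (t : ℂ) ≠ 0 := Complex.ofReal_ne_zero.mpr ht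
  simp only [slope, vsub_eq_sub, sub_zero, Complex.ofReal_zero, mul_zero, zero_mul,
    Complex.exp_zero, Complex.real_smul, Complex.ofReal_inv]
  rw [div_eq_inv_mul]
  ring

set_option maxHeartbeats 1000000 in
private lemma step_aux (m : ℕ) (β b : ℝ) (hβ : 0 < β) (hb : 0 < b) (G : ℝ → ℂ) (L : ℝ)
    (hL : 0 < L)
    (hT : Tendsto (fun t : ℝ => (1 - G t) / (t : ℂ)) (𝓝[≠] (0 : ℝ)) (𝓝 (L : ℂ))) :
    ∃ L' : ℝ, 0 < L' ∧ Tendsto (fun t : ℝ =>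
      (1 - ((((m : ℂ) - 2) * t + β) / ((m : ℂ) * t + β)
          - (((m : ℂ) - 4) * t + β) / ((m : ℂ) * t + β) * Complex.exp (-2 * t * b) * G t) /
        (1 - (((m : ℂ) - 2) * t + β) / ((m : ℂ) * t + β) * Complex.exp (-2 * t * b) * G t))
        / (t : ℂ))
      (𝓝[≠] (0 : ℝ)) (𝓝 (L' : ℂ)) := by
  have hβC : (β : ℂ) ≠ 0 := Complex.ofReal_ne_zero.mpr hβ.ne'
  have htne : ∀ᶠ t : ℝ in 𝓝[≠] (0 : ℝ), t ≠ 0 := by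
    filter_upwards [self_mem_nhdsWithin] with t ht using ht
  -- X and its limit
  have hXlim : Tendsto (fun t : ℝ => (m : ℂ) * t + β) (𝓝[≠] (0 : ℝ)) (𝓝 (β : ℂ)) := by
    have hc : Continuous fun t : ℝ => (m : ℂ) * t + β := by continuity
    simpa using (hc.tendsto 0).mono_left nhdsWithin_le_nhds
  have hXne : ∀ᶠ t : ℝ in 𝓝[≠] (0 : ℝ), (m : ℂ) * t + β ≠ 0 := hXlim.eventually_ne hβC
  -- G tends to 1
  have hG1 : Tendsto G (𝓝[≠] (0 : ℝ)) (𝓝 1) := by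
    have h0 : Tendsto (fun t : ℝ => (t : ℂ)) (𝓝[≠] (0 : ℝ)) (𝓝 0) := by
      simpa using (Complex.continuous_ofReal.tendsto 0).mono_left nhdsWithin_le_nhds
    have h2 : Tendsto (fun t : ℝ => 1 - (t : ℂ) * ((1 - G t) / (t : ℂ)))
        (𝓝[≠] (0 : ℝ)) (𝓝 1) := by
      have := ((tendsto_const_nhds :
        Tendsto (fun _ : ℝ => (1 : ℂ)) (𝓝[≠] (0 : ℝ)) (𝓝 1)).sub (h0.mul hT))
      simpa using this
    refine h2.congr' ?_
    filter_upwards [htne] with t ht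
    have ht' : (t : ℂ) ≠ 0 := Complex.ofReal_ne_zero.mpr ht
    field_simp
    ring
  -- E tends to 1
  have hE1 : Tendsto (fun t : ℝ => Complex.exp (-2 * (t : ℂ) * b)) (𝓝[≠] (0 : ℝ)) (𝓝 1) := by
    have hc : Continuous fun t : ℝ => Complex.exp (-2 * (t : ℂ) * b) := by continuity
    simpa using (hc.tendsto 0).mono_left nhdsWithin_le_nhds
  -- (1 - E G)/t tends to L + 2b
  have hEG : Tendsto (fun t : ℝ => (1 - Complex.exp (-2 * (t : ℂ) * b) * G t) / (t : ℂ))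
      (𝓝[≠] (0 : ℝ)) (𝓝 ((L : ℂ) + 2 * b)) := by
    have h := ((exp_slope b).mul hG1).add hT
    have h2 : Tendsto (fun t : ℝ =>
        (1 - Complex.exp (-2 * (t : ℂ) * b)) / (t : ℂ) * G t + (1 - G t) / (t : ℂ))
        (𝓝[≠] (0 : ℝ)) (𝓝 ((L : ℂ) + 2 * b)) := by
      convert h using 2
      ring
    refine h2.congr fun t => ?_
    ring
  -- 2/X tends to 2/β
  have hdiv : Tendsto (fun t : ℝ => (2 : ℂ) / ((m : ℂ) * t + β)) (𝓝[≠] (0 : ℝ))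
      (𝓝 (2 / (β : ℂ))) := tendsto_const_nhds.div hXlim hβC
  -- D/t tends to L + 2b + 2/β
  have hDt : Tendsto (fun t : ℝ =>
      (1 - (((m : ℂ) - 2) * t + β) / ((m : ℂ) * t + β) * Complex.exp (-2 * t * b) * G t)
        / (t : ℂ))
      (𝓝[≠] (0 : ℝ)) (𝓝 ((L : ℂ) + 2 * b + 2 / β)) := by
    have h := hEG.add (hdiv.mul (hE1.mul hG1))
    have h2 : Tendsto (fun t : ℝ =>
        (1 - Complex.exp (-2 * (t : ℂ) * b) * G t) / (t : ℂ)
          + (2 : ℂ) / ((m : ℂ) * t + β) * (Complex.exp (-2 * (t : ℂ) * b) * G t))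
        (𝓝[≠] (0 : ℝ)) (𝓝 ((L : ℂ) + 2 * b + 2 / β)) := by
      convert h using 2
      ring
    refine h2.congr' ?_
    filter_upwards [htne, hXne] with t ht hx
    have ht' : (t : ℂ) ≠ 0 := Complex.ofReal_ne_zero.mpr ht
    have e1 := mul_inv_cancel₀ hx
    have e2 := mul_inv_cancel₀ ht'
    simp only [div_eq_mul_inv]
    linear_combination (Complex.exp (-2 * (t : ℂ) * b) * G t * (t : ℂ)⁻¹) * e1
      - (2 * ((m : ℂ) * t + β)⁻¹ * Complex.exp (-2 * (t : ℂ) * b) * G t) * e2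
  -- limit of D/t is nonzero
  have hlim_ne : ((L : ℂ) + 2 * b + 2 / β) ≠ 0 := by
    have h1 : ((L + 2 * b + 2 / β : ℝ) : ℂ) ≠ 0 :=
      Complex.ofReal_ne_zero.mpr (by positivity)
    push_cast at h1
    exact h1
  -- D is eventually nonzero
  have hDne : ∀ᶠ t : ℝ in 𝓝[≠] (0 : ℝ),
      (1 - (((m : ℂ) - 2) * t + β) / ((m : ℂ) * t + β) * Complex.exp (-2 * t * b) * G t) ≠ 0 := by
    filter_upwards [hDt.eventually_ne hlim_ne] with t h1
    intro h0
    apply h1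
    rw [h0, zero_div]
  -- (D - N)/t^2 tends to (2/β)(L + 2b)
  have hDN : Tendsto (fun t : ℝ =>
      ((1 - (((m : ℂ) - 2) * t + β) / ((m : ℂ) * t + β) * Complex.exp (-2 * t * b) * G t)
        - ((((m : ℂ) - 2) * t + β) / ((m : ℂ) * t + β)
          - (((m : ℂ) - 4) * t + β) / ((m : ℂ) * t + β) * Complex.exp (-2 * t * b) * G t))
        / (t : ℂ) ^ 2)
      (𝓝[≠] (0 : ℝ)) (𝓝 (2 / (β : ℂ) * ((L : ℂ) + 2 * b))) := by
    have h := hdiv.mul hEG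
    refine h.congr' ?_
    filter_upwards [htne, hXne] with t ht hx
    have ht' : (t : ℂ) ≠ 0 := Complex.ofReal_ne_zero.mpr ht
    field_simp
    ring
  refine ⟨2 / β * (L + 2 * b) / (L + 2 * b + 2 / β), by positivity, ?_⟩
  have h := hDN.div hDt hlim_ne
  have hval : ((2 / β * (L + 2 * b) / (L + 2 * b + 2 / β) : ℝ) : ℂ)
      = 2 / (β : ℂ) * ((L : ℂ) + 2 * b) / ((L : ℂ) + 2 * b + 2 / β) := by
    push_cast
    ring
  rw [hval]
  refine h.congr' ?_
  filter_upwards [htne, hXne, hDne] with t ht hx hD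
  have ht' : (t : ℂ) ≠ 0 := Complex.ofReal_ne_zero.mpr ht
  exact div_identity _ _ _ ht' hD

private lemma key (n : ℕ → ℕ) (hn : ∀ j, 2 ≤ n j) (α a : ℕ → ℝ)
    (hα : ∀ j, 0 < α j) (ha : ∀ j, 0 < a j) (p : ℕ) :
    ∃ L : ℝ, 0 < L ∧ Tendsto (fun t : ℝ => (1 - gfun n α a p (t : ℂ)) / (t : ℂ))
      (𝓝[≠] (0 : ℝ)) (𝓝 (L : ℂ)) := by
  induction p with
  | zero =>
    have hn0 : (0 : ℝ) < n 0 := by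
      have := hn 0; positivity
    refine ⟨(n 0 : ℝ) / α 0, div_pos hn0 (hα 0), ?_⟩
    have hXlim : Tendsto (fun t : ℝ => (n 0 : ℂ) * t + α 0) (𝓝[≠] (0 : ℝ)) (𝓝 (α 0 : ℂ)) := by
      have hc : Continuous fun t : ℝ => (n 0 : ℂ) * t + α 0 := by continuity
      simpa using (hc.tendsto 0).mono_left nhdsWithin_le_nhds
    have hαC : (α 0 : ℂ) ≠ 0 := Complex.ofReal_ne_zero.mpr (hα 0).ne'
    have hXne : ∀ᶠ t : ℝ in 𝓝[≠] (0 : ℝ), (n 0 : ℂ) * t + α 0 ≠ 0 := hXlim.eventually_ne hαC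
    have h := (tendsto_const_nhds (x := (n 0 : ℂ))).div hXlim hαC
    have hval : (((n 0 : ℝ) / α 0 : ℝ) : ℂ) = (n 0 : ℂ) / (α 0 : ℂ) := by push_cast; ring
    rw [hval]
    refine h.congr' ?_
    filter_upwards [self_mem_nhdsWithin, hXne] with t ht hx
    have ht' : (t : ℂ) ≠ 0 := Complex.ofReal_ne_zero.mpr ht
    show (n 0 : ℂ) / ((n 0 : ℂ) * t + α 0) = (1 - gfun n α a 0 t) / t
    simp only [gfun]
    field_simp
    ring
  | succ p ih =>
    obtain ⟨L, hL, hT⟩ := ih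
    obtain ⟨L', hL', hT'⟩ := step_aux (n (p + 1)) (α (p + 1)) (a p) (hα (p + 1)) (ha p)
      (fun t => gfun n α a p t) L hL hT
    refine ⟨L', hL', ?_⟩
    refine hT'.congr fun t => ?_
    simp only [gfun]

theorem stmt_7 (n : ℕ → ℕ) (hn : ∀ j, 2 ≤ n j) (α a : ℕ → ℝ)
    (hα : ∀ j, 0 < α j) (ha : ∀ j, 0 < a j) (p : ℕ) :
    Filter.Tendsto (fun t : ℝ => gfun n α a p (t : ℂ))
      (nhdsWithin 0 {0}ᶜ) (nhds 1) := by
  obtain ⟨L, hL, hT⟩ := key n hn α a hα ha p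
  have h0 : Tendsto (fun t : ℝ => (t : ℂ)) (𝓝[≠] (0 : ℝ)) (𝓝 0) := by
    simpa using (Complex.continuous_ofReal.tendsto 0).mono_left nhdsWithin_le_nhds
  have h2 : Tendsto (fun t : ℝ => 1 - (t : ℂ) * ((1 - gfun n α a p t) / (t : ℂ)))
      (𝓝[≠] (0 : ℝ)) (𝓝 1) := by
    have := ((tendsto_const_nhds :
      Tendsto (fun _ : ℝ => (1 : ℂ)) (𝓝[≠] (0 : ℝ)) (𝓝 1)).sub (h0.mul hT))
    simpa using this
  refine h2.congr' ?_
  filter_upwards [self_mem_nhdsWithin] with t ht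
  have ht' : (t : ℂ) ≠ 0 := Complex.ofReal_ne_zero.mpr ht
  field_simp
  ring
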